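/- Let G be 2-connected and let (G, L) be a labeled graph with no admissible 2-cut, where L is a stable set whose vertices all have degree two. If G is a cycle, then G has at most 6 vertices. -/

import Mathlib

open SimpleGraph

/-- `G` is a 2-sum of `G₁` and `G₂` with joins `j₁, j₂`.  Here `zᵢ` is a vertex of
`Gᵢ` of degree two with distinct neighbors `xᵢ, yᵢ`; the graphs `Gᵢ - zᵢ` (with the
edge `xᵢyᵢ` removed if present) are glued into `G` along `x₁ = x₂ = j₁` and
`y₁ = y₂ = j₂`, and the edge `j₁j₂` is present in `G` iff `xᵢyᵢ ∈ E(Gᵢ)` for some `i`. -/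
def IsTwoSumOf {V V₁ V₂ : Type*} (G : SimpleGraph V) (G₁ : SimpleGraph V₁)
    (G₂ : SimpleGraph V₂) (j₁ j₂ : V) : Prop :=
  ∃ (z₁ x₁ y₁ : V₁) (z₂ x₂ y₂ : V₂) (f₁ : V₁ → V) (f₂ : V₂ → V),
    x₁ ≠ y₁ ∧ x₂ ≠ y₂ ∧
    (∀ u, G₁.Adj z₁ u ↔ u = x₁ ∨ u = y₁) ∧
    (∀ u, G₂.Adj z₂ u ↔ u = x₂ ∨ u = y₂) ∧
    Set.InjOn f₁ {v | v ≠ z₁} ∧ Set.InjOn f₂ {v | v ≠ z₂} ∧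
    f₁ x₁ = j₁ ∧ f₁ y₁ = j₂ ∧ f₂ x₂ = j₁ ∧ f₂ y₂ = j₂ ∧
    (∀ v : V, v ∈ f₁ '' {u | u ≠ z₁} ∪ f₂ '' {u | u ≠ z₂}) ∧
    (f₁ '' {u | u ≠ z₁}) ∩ (f₂ '' {u | u ≠ z₂}) = {j₁, j₂} ∧
    (∀ u v, u ≠ z₁ → v ≠ z₁ → s(u, v) ≠ s(x₁, y₁) →
      (G.Adj (f₁ u) (f₁ v) ↔ G₁.Adj u v)) ∧
    (∀ u v, u ≠ z₂ → v ≠ z₂ → s(u, v) ≠ s(x₂, y₂) →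
      (G.Adj (f₂ u) (f₂ v) ↔ G₂.Adj u v)) ∧
    (G.Adj j₁ j₂ ↔ (G₁.Adj x₁ y₁ ∨ G₂.Adj x₂ y₂)) ∧
    (∀ a b, G.Adj a b →
      (a ∈ f₁ '' {u | u ≠ z₁} ∧ b ∈ f₁ '' {u | u ≠ z₁}) ∨
      (a ∈ f₂ '' {u | u ≠ z₂} ∧ b ∈ f₂ '' {u | u ≠ z₂}))

/-- `{x, y}` is an admissible 2-cut of `G`: `G` can be expressed as a 2-sum of two
graphs, each having fewer edges than `G`, with `{x, y}` the set of joins. -/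
def AdmissibleTwoCut {V : Type*} (G : SimpleGraph V) (x y : V) : Prop :=
  ∃ (n₁ n₂ : ℕ) (G₁ : SimpleGraph (Fin n₁)) (G₂ : SimpleGraph (Fin n₂)),
    IsTwoSumOf G G₁ G₂ x y ∧
    G₁.edgeSet.ncard < G.edgeSet.ncard ∧ G₂.edgeSet.ncard < G.edgeSet.ncard

/-- `G` is 2-connected: at least 3 vertices, and deleting any single vertex
leaves a connected graph. -/
def TwoConnected {V : Type*} [Fintype V] (G : SimpleGraph V) : Prop :=
  3 ≤ Fintype.card V ∧ ∀ v : V, (G.induce {u | u ≠ v}).Connected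

/-- The cycle graph on `Fin m`. -/
def cyc (m : ℕ) : SimpleGraph (Fin m) where
  Adj a b := a ≠ b ∧ ((a.val + 1) % m = b.val ∨ (b.val + 1) % m = a.val)
  symm := by
    constructor
    rintro a b ⟨h1, h2⟩
    exact ⟨h1.symm, h2.symm⟩
  loopless := by constructor; rintro a ⟨h, -⟩; exact h rfl

lemma cyc_adj {m : ℕ} {a b : Fin m} :
    (cyc m).Adj a b ↔ a ≠ b ∧ ((a.val + 1) % m = b.val ∨ (b.val + 1) % m = a.val) :=
  Iff.rfl

lemma fin_ne_iff {m : ℕ} {a b : Fin m} : a ≠ b ↔ a.val ≠ b.val := by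
  constructor
  · intro h h'; exact h (Fin.ext h')
  · intro h h'; exact h (by rw [h'])

lemma cyc_adj_iff {m : ℕ} {a b : Fin m} (ha : a.val + 2 ≤ m) (hb : b.val + 2 ≤ m) :
    ((cyc m).Adj a b ↔ (b.val = a.val + 1 ∨ a.val = b.val + 1)) := by
  rw [cyc_adj, fin_ne_iff, Nat.mod_eq_of_lt (by omega), Nat.mod_eq_of_lt (by omega)]
  omega

lemma cyc_last_adj {m : ℕ} (hm : 3 ≤ m) {z u : Fin m} (hz : z.val = m - 1) :
    (cyc m).Adj z u ↔ (u.val = 0 ∨ u.val = m - 2) := by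
  have hu := u.isLt
  rw [cyc_adj, fin_ne_iff, hz]
  have h1 : (m - 1 + 1) % m = 0 := by
    have h : m - 1 + 1 = m := by omega
    rw [h, Nat.mod_self]
  rw [h1]
  rcases Nat.lt_or_ge (u.val + 1) m with h2 | h2
  · rw [Nat.mod_eq_of_lt h2]; omega
  · have h3 : u.val + 1 = m := by omega
    rw [h3, Nat.mod_self]; omega

lemma cyc_deg {m : ℕ} (hm : 3 ≤ m) (a : Fin m) : ((cyc m).neighborSet a).ncard = 2 := by
  have hmpos : 0 < m := by omega
  have ha := a.isLt
  set c₁ : ℕ := if a.val = m - 1 then 0 else a.val + 1 with hc₁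
  set c₂ : ℕ := if a.val = 0 then m - 1 else a.val - 1 with hc₂
  have hc₁lt : c₁ < m := by rw [hc₁]; split_ifs <;> omega
  have hc₂lt : c₂ < m := by rw [hc₂]; split_ifs <;> omega
  have hmod1 : (a.val + 1) % m = c₁ := by
    rw [hc₁]; split_ifs with h
    · rw [h]
      have : m - 1 + 1 = m := by omega
      rw [this, Nat.mod_self]
    · exact Nat.mod_eq_of_lt (by omega)
  have hmod2 : (c₂ + 1) % m = a.val := by
    rw [hc₂]; split_ifs with h
    · have : m - 1 + 1 = m := by omega
      rw [this, Nat.mod_self, h]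
    · rw [Nat.mod_eq_of_lt (by omega)]; omega
  have hset : (cyc m).neighborSet a = {⟨c₁, hc₁lt⟩, ⟨c₂, hc₂lt⟩} := by
    ext u
    have hu := u.isLt
    simp only [SimpleGraph.mem_neighborSet, Set.mem_insert_iff, Set.mem_singleton_iff]
    rw [cyc_adj, fin_ne_iff, Fin.ext_iff, Fin.ext_iff, hmod1]
    simp only []
    constructor
    · rintro ⟨hne', h | h⟩
      · left; omega
      · right
        rcases Nat.lt_or_ge (u.val + 1) m with h2 | h2
        · rw [Nat.mod_eq_of_lt h2] at h
          rw [hc₂]; split_ifs <;> omega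
        · have h3 : u.val + 1 = m := by omega
          rw [h3, Nat.mod_self] at h
          rw [hc₂]; split_ifs <;> omega
    · rintro (h | h)
      · constructor
        · rw [hc₁] at h; split_ifs at h <;> omega
        · left; omega
      · constructor
        · rw [hc₂] at h; split_ifs at h <;> omega
        · right; rw [← h] at hmod2; exact hmod2
  rw [hset]
  apply Set.ncard_pair
  rw [fin_ne_iff]
  simp only []
  rw [hc₁, hc₂]; split_ifs <;> omega

lemma edgecount {W : Type*} [Fintype W] (H : SimpleGraph W)
    (h : ∀ v, (H.neighborSet v).ncard = 2) : H.edgeSet.ncard = Fintype.card W := by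
  classical
  have hdeg : ∀ v, H.degree v = 2 := by
    intro v
    rw [← SimpleGraph.card_neighborSet_eq_degree]
    rw [← Set.toFinset_card, ← Set.ncard_eq_toFinset_card']
    exact h v
  have hsum := SimpleGraph.sum_degrees_eq_twice_card_edges H
  rw [Finset.sum_congr rfl (fun v _ => hdeg v), Finset.sum_const, Finset.card_univ,
    smul_eq_mul, mul_comm] at hsum
  have hcard : H.edgeFinset.card = Fintype.card W := by omega
  rw [← hcard, Set.ncard_eq_toFinset_card']
  exact congrArg Finset.card (Finset.ext fun e => by simp)

lemma cycle_structure {V : Type} [Fintype V] {G : SimpleGraph V}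
    (hconn : G.Connected) (hreg : ∀ v, (G.neighborSet v).ncard = 2) (v0 : V) :
    ∃ f : ℕ → V, f 0 = v0 ∧ Set.InjOn f (Set.Iio (Fintype.card V)) ∧
      (∀ v, ∃ k < Fintype.card V, f k = v) ∧
      (∀ i j, i < Fintype.card V → j < Fintype.card V →
        (G.Adj (f i) (f j) ↔ (j = i + 1 ∨ i = j + 1 ∨
          (i = 0 ∧ j + 1 = Fintype.card V) ∨ (j = 0 ∧ i + 1 = Fintype.card V)))) := by
  classical
  choose nb1 nb2 hnb hNv using fun v => Set.ncard_eq_two.mp (hreg v)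
  have adj_nb1 : ∀ v, G.Adj v (nb1 v) := by
    intro v
    have : nb1 v ∈ G.neighborSet v := by rw [hNv v]; exact Set.mem_insert _ _
    exact this
  have adj_nb2 : ∀ v, G.Adj v (nb2 v) := by
    intro v
    have : nb2 v ∈ G.neighborSet v := by
      rw [hNv v]; exact Set.mem_insert_of_mem _ rfl
    exact this
  have mem_cases : ∀ v w, G.Adj v w → w = nb1 v ∨ w = nb2 v := by
    intro v w h
    have : w ∈ G.neighborSet v := h
    rw [hNv v] at this
    exact this
  set nxt : V → V → V := fun u v => if u = nb1 v then nb2 v else nb1 v with hnxt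
  have nxt_adj : ∀ u v, G.Adj v (nxt u v) := by
    intro u v
    rw [hnxt]
    dsimp only
    split_ifs
    · exact adj_nb2 v
    · exact adj_nb1 v
  have nxt_ne : ∀ u v, G.Adj v u → nxt u v ≠ u := by
    intro u v h
    rw [hnxt]
    dsimp only
    split_ifs with h1
    · rw [h1]; exact (hnb v).symm
    · rcases mem_cases v u h with h2 | h2
      · exact absurd h2 h1
      · rw [h2]; exact hnb v
  have nxt_uniq : ∀ u v w, G.Adj v u → G.Adj v w → w ≠ u → w = nxt u v := by
    intro u v w hu hw hwu
    rw [hnxt]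
    dsimp only
    rcases mem_cases v u hu with h1 | h1 <;> rcases mem_cases v w hw with h2 | h2 <;>
      simp_all
  set g : ℕ → V × V := fun k => Nat.rec (v0, nb1 v0) (fun _ p => (p.2, nxt p.1 p.2)) k
    with hg
  set f : ℕ → V := fun k => (g k).1 with hf
  have hf0 : f 0 = v0 := rfl
  have hfs : ∀ k, (g k).2 = f (k + 1) := fun k => rfl
  have hstep : ∀ k, f (k + 2) = nxt (f k) (f (k + 1)) := fun k => rfl
  have hadj : ∀ k, G.Adj (f k) (f (k + 1)) := by
    intro k
    cases k with
    | zero => exact adj_nb1 v0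
    | succ n =>
      rw [hstep n]
      exact nxt_adj _ _
  have hne2 : ∀ k, f (k + 2) ≠ f k := by
    intro k
    rw [hstep k]
    exact nxt_ne _ _ (hadj k).symm
  have hNB : ∀ k, G.neighborSet (f (k + 1)) = {f k, f (k + 2)} := by
    intro k
    have hsub : {f k, f (k + 2)} ⊆ G.neighborSet (f (k + 1)) := by
      intro w hw
      rcases hw with rfl | rfl
      · exact (hadj k).symm
      · exact hadj (k + 1)
    exact (Set.eq_of_subset_of_ncard_le hsub
      (by rw [hreg, Set.ncard_pair (hne2 k).symm]) (Set.toFinite _)).symm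
  have hback : ∀ a b, f (a + 1) = f (b + 1) → f (a + 2) = f (b + 2) → f a = f b := by
    intro a b h1 h2
    have hmem : f a ∈ G.neighborSet (f (b + 1)) := by
      rw [← h1]; exact (hadj a).symm
    rw [hNB b] at hmem
    rcases hmem with h | h
    · exact h
    · exact absurd (h.trans h2.symm) (fun hh => hne2 a hh.symm)
  set p : ℕ → V × V := fun k => (f k, f (k + 1)) with hp
  have hpdown : ∀ i j, i < j → p i = p j → p 0 = p (j - i) := by
    intro i j hij hpij
    have key : ∀ t, t ≤ i → p (i - t) = p (j - t) := by
      intro t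
      induction t with
      | zero => intro _; simpa using hpij
      | succ t ih =>
        intro ht
        have ht' : t ≤ i := by omega
        have h0 := ih ht'
        have e1 : f (i - t) = f (j - t) := congrArg Prod.fst h0
        have e2 : f (i - t + 1) = f (j - t + 1) := congrArg Prod.snd h0
        have ha1 : i - t = (i - (t + 1)) + 1 := by omega
        have hb1 : j - t = (j - (t + 1)) + 1 := by omega
        have hfst : f (i - (t + 1)) = f (j - (t + 1)) := by
          apply hback
          · rw [← ha1, ← hb1]; exact e1
          · have ha2 : i - t + 1 = (i - (t + 1)) + 2 := by omega
            have hb2 : j - t + 1 = (j - (t + 1)) + 2 := by omega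
            rw [← ha2, ← hb2]; exact e2
        have hsnd : f (i - (t + 1) + 1) = f (j - (t + 1) + 1) := by
          rw [← ha1, ← hb1]; exact e1
        exact Prod.ext hfst hsnd
    have := key i (le_refl i)
    simpa using this
  obtain ⟨i, j, hij, hpij⟩ := Finite.exists_ne_map_eq_of_infinite p
  have hex : ∃ t, 0 < t ∧ p t = p 0 := by
    rcases Ne.lt_or_gt hij with h | h
    · exact ⟨j - i, by omega, (hpdown i j h hpij).symm⟩
    · exact ⟨i - j, by omega, (hpdown j i h hpij.symm).symm⟩
  obtain ⟨m, hmpos, hpm, hmin⟩ : ∃ m, 0 < m ∧ p m = p 0 ∧ ∀ t, t < m → ¬(0 < t ∧ p t = p 0) :=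
    ⟨Nat.find hex, (Nat.find_spec hex).1, (Nat.find_spec hex).2,
      fun t ht => Nat.find_min hex ht⟩
  have hpper : ∀ k, p (k + m) = p k := by
    intro k
    induction k with
    | zero => simpa using hpm
    | succ k ih =>
      have e1 : f (k + m) = f k := congrArg Prod.fst ih
      have e2 : f (k + m + 1) = f (k + 1) := congrArg Prod.snd ih
      have hfst : f (k + 1 + m) = f (k + 1) := by
        rw [show k + 1 + m = k + m + 1 from by omega]; exact e2
      have hsnd : f (k + 1 + m + 1) = f (k + 1 + 1) := by
        have h' : f (k + 1 + m + 1) = nxt (f k) (f (k + 1)) := by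
          rw [show k + 1 + m + 1 = (k + m) + 2 from by omega, hstep (k + m), e1, e2]
        rw [h', ← hstep k]
      exact Prod.ext hfst hsnd
  have hper : ∀ k, f (k + m) = f k := fun k => congrArg Prod.fst (hpper k)
  have hperm : ∀ t k, f (k + t * m) = f k := by
    intro t
    induction t with
    | zero => intro k; simp
    | succ t ih =>
      intro k
      have : k + (t + 1) * m = (k + t * m) + m := by ring
      rw [this, hper, ih]
  have hmod : ∀ k, f k = f (k % m) := by
    intro k
    conv_lhs => rw [← Nat.mod_add_div' k m]
    exact hperm _ _
  have hfm : f m = f 0 := congrArg Prod.fst hpm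
  have hm3 : 3 ≤ m := by
    rcases Nat.lt_or_ge m 3 with h | h
    · exfalso
      have h2 : m = 1 ∨ m = 2 := by omega
      rcases h2 with h1 | h1 <;> rw [h1] at hfm
      · exact (hadj 0).ne hfm.symm
      · exact hne2 0 hfm
    · exact h
  -- neighborhood of f i for arbitrary i
  have hNi : ∀ i, G.neighborSet (f i) = {f (i + m - 1), f (i + 1)} := by
    intro i
    have h1 := hNB (i + m - 1)
    rw [show i + m - 1 + 1 = i + m from by omega] at h1
    rw [show i + m - 1 + 2 = (i + 1) + m from by omega] at h1
    rw [hper i, hper (i + 1)] at h1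
    exact h1
  -- injectivity
  have hclaim : ∀ i j, i < j → j < m → f i ≠ f j := by
    intro i j hij hjm hfij
    have hmem : f (j + 1) ∈ G.neighborSet (f i) := by
      rw [hfij]; exact hadj j
    rw [hNi i] at hmem
    rcases hmem with hB | hA
    · -- reversal case
      have hQ : ∀ k, k + 1 ≤ m → f (j + k) = f (i + m - k) ∧
          f (j + k + 1) = f (i + m - (k + 1)) := by
        intro k
        induction k with
        | zero =>
          intro _
          constructor
          · rw [show j + 0 = j from rfl, show i + m - 0 = i + m from rfl, hper i, hfij]
          · simpa using hB
        | succ k ih =>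
          intro hk
          obtain ⟨h1, h2⟩ := ih (by omega)
          refine ⟨by simpa [show j + (k+1) = j + k + 1 from rfl] using h2, ?_⟩
          have hN2 : G.neighborSet (f (i + m - (k + 1))) =
              {f (i + m - (k + 2)), f (i + m - k)} := by
            have := hNB (i + m - (k + 2))
            rw [show i + m - (k + 2) + 1 = i + m - (k + 1) from by omega,
              show i + m - (k + 2) + 2 = i + m - k from by omega] at this
            exact this
          have hmem2 : f (j + k + 2) ∈ G.neighborSet (f (i + m - (k + 1))) := by
            rw [← h2]; exact hadj (j + k + 1)
          rw [hN2] at hmem2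
          rcases hmem2 with h | h
          · rw [show j + (k + 1) + 1 = j + k + 2 from by omega]
            exact h
          · exfalso
            apply hne2 (j + k)
            rw [h, ← h1]
        
      set s := m + i - j with hs
      have hs1 : 1 ≤ s := by omega
      have hs2 : s ≤ m - 1 := by omega
      rcases Nat.even_or_odd s with he | ho
      · have h2k : 2 * (s / 2) = s := by
          rcases he with ⟨r, hr⟩; omega
        set k := s / 2 with hk
        have hk1 : 1 ≤ k := by omega
        have hkm : k + 2 ≤ m := by omega
        have hA1 := (hQ (k + 1) (by omega)).1
        have ht : i + m - (k + 1) = j + k - 1 := by omega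
        rw [ht] at hA1
        apply hne2 (j + k - 1)
        rw [show j + k - 1 + 2 = j + (k + 1) from by omega]
        exact hA1
      · have h2k : 2 * ((s + 1) / 2) = s + 1 := by
          rcases ho with ⟨r, hr⟩; omega
        set k := (s + 1) / 2 with hk
        have hk1 : 1 ≤ k := by omega
        have hkm : k + 1 ≤ m := by omega
        have hA1 := (hQ k (by omega)).1
        have ht : i + m - k = j + k - 1 := by omega
        rw [ht] at hA1
        have : j + k = j + k - 1 + 1 := by omega
        rw [this] at hA1
        exact (hadj (j + k - 1)).ne' hA1
    · -- f (j+1) = f (i+1) : shift case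
      have hpij2 : p i = p j := Prod.ext hfij hA.symm
      have := hpdown i j hij hpij2
      exact hmin (j - i) (by omega) ⟨by omega, this.symm⟩
  have hinj : Set.InjOn f (Set.Iio m) := by
    intro a ha b hb hab
    rcases lt_trichotomy a b with h | h | h
    · exact absurd hab (hclaim a b h hb)
    · exact h
    · exact absurd hab.symm (hclaim b a h ha)
  have hclosed : ∀ v, v ∈ Set.range f → ∀ w, G.Adj v w → w ∈ Set.range f := by
    rintro v ⟨k, rfl⟩ w hw
    have hmem : w ∈ G.neighborSet (f k) := hw
    rw [hNi k] at hmem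
    rcases hmem with h | h
    · exact ⟨k + m - 1, h.symm⟩
    · exact ⟨k + 1, h.symm⟩
  have hrange : ∀ v, v ∈ Set.range f := by
    have key : ∀ (u v : V), G.Walk u v → u ∈ Set.range f → v ∈ Set.range f := by
      intro u v w
      induction w with
      | nil => exact id
      | cons h pw ih => exact fun hu => ih (hclosed _ hu _ h)
    intro v
    obtain ⟨w⟩ := hconn.preconnected v0 v
    exact key v0 v w ⟨0, hf0⟩
  have hcardeq : m = Fintype.card V := by
    have h1 : Set.range f = Set.univ := Set.eq_univ_of_forall hrange
    have h2 : Set.range f = f '' Set.Iio m := by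
      ext v
      constructor
      · rintro ⟨k, rfl⟩
        exact ⟨k % m, Nat.mod_lt _ hmpos, (hmod k).symm⟩
      · rintro ⟨k, -, rfl⟩
        exact ⟨k, rfl⟩
    have h3 : (f '' Set.Iio m).ncard = m := by
      rw [Set.ncard_image_of_injOn hinj, ← Finset.coe_Iio, Set.ncard_coe_finset,
        Nat.card_Iio]
    rw [h1] at h2
    have h4 : (Set.univ : Set V).ncard = Fintype.card V := by
      rw [Set.ncard_univ, Nat.card_eq_fintype_card]
    rw [← h2, h4] at h3
    exact h3.symm
  rw [← hcardeq]
  refine ⟨f, hf0, hinj, ?_, ?_⟩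
  · intro v
    obtain ⟨k, hk⟩ := hrange v
    exact ⟨k % m, Nat.mod_lt _ hmpos, by rw [← hmod k, hk]⟩
  · intro a b ha hb
    constructor
    · intro hA
      have hmem : f b ∈ G.neighborSet (f a) := hA
      rw [hNi a] at hmem
      rcases hmem with h | h
      · rcases Nat.eq_zero_or_pos a with h0 | h0
        · right; right; left
          refine ⟨h0, ?_⟩
          have hb' : b = m - 1 := by
            apply hinj hb (show m - 1 ∈ Set.Iio m by simp; omega)
            rw [h, h0]
            congr 1
            omega
          omega
        · right; left
          have := hinj hb (show a - 1 ∈ Set.Iio m by simp; omega) ?_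
          · omega
          · rw [h]
            have : a + m - 1 = (a - 1) + m := by omega
            rw [this, hper]
      · rcases Nat.lt_or_ge (a + 1) m with h1 | h1
        · left
          exact hinj hb (show a + 1 ∈ Set.Iio m by simpa) h
        · right; right; right
          have ha1 : a + 1 = m := by omega
          refine ⟨?_, ha1⟩
          apply hinj hb (show (0:ℕ) ∈ Set.Iio m by simp; omega)
          rw [h, ha1, hfm]
    · rintro (rfl | rfl | ⟨rfl, hbm⟩ | ⟨rfl, ham⟩)
      · exact hadj a
      · exact (hadj b).symm
      · have : f 0 = f (b + 1) := by rw [hbm, hfm]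
        rw [this]
        exact (hadj b).symm
      · have : f 0 = f (a + 1) := by rw [ham, hfm]
        rw [this]
        exact hadj a


/-- If `(G, L)` is a labeled graph (G 2-connected, L a stable set of degree-two
vertices) with no admissible 2-cut, and `G` is a cycle, then `G` has at most 6
vertices. -/
theorem cycle_le_six_of_no_admissible {V : Type} [Fintype V]
    (G : SimpleGraph V) (L : Set V)
    (h2 : TwoConnected G)
    (hstable : ∀ u ∈ L, ∀ v ∈ L, ¬ G.Adj u v)
    (hdeg : ∀ v ∈ L, (G.neighborSet v).ncard = 2)
    (hna : ∀ x y : V, x ∉ L → y ∉ L → ¬ AdmissibleTwoCut G x y)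
    (hcyc : G.Connected ∧ ∀ v : V, (G.neighborSet v).ncard = 2) :
    Fintype.card V ≤ 6 := by
  classical
  obtain ⟨hconn, hreg⟩ := hcyc
  by_contra hcard
  push_neg at hcard
  set n := Fintype.card V with hn
  have hn7 : 7 ≤ n := hcard
  -- there is a vertex outside L
  have hnl : ∃ v : V, v ∉ L := by
    by_contra h
    push_neg at h
    have hne : Nonempty V := Fintype.card_pos_iff.mp (by omega)
    obtain ⟨v⟩ := hne
    have hpos : 0 < (G.neighborSet v).ncard := by rw [hreg v]; omega
    obtain ⟨w, hw⟩ := (Set.ncard_pos (Set.toFinite _)).mp hpos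
    exact hstable v (h v) w (h w) hw
  obtain ⟨v0, hv0⟩ := hnl
  obtain ⟨c, hc0, hinj, hsurj, hchar⟩ := cycle_structure hconn hreg v0
  rw [← hn] at hinj hsurj hchar
  -- choose d
  obtain ⟨d, hd3, hd4, hdL⟩ : ∃ d, 3 ≤ d ∧ d ≤ 4 ∧ c d ∉ L := by
    by_cases h3 : c 3 ∈ L
    · refine ⟨4, by omega, le_refl 4, fun h4 => ?_⟩
      have hadj34 : G.Adj (c 3) (c 4) := by
        rw [hchar 3 4 (by omega) (by omega)]; left; rfl
      exact hstable _ h3 _ h4 hadj34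
    · exact ⟨3, le_refl 3, by omega, h3⟩
  have hc0L : c 0 ∉ L := by rw [hc0]; exact hv0
  have hmodd : ∀ w : ℕ, w ≤ n - d → (d + w) % n = if w = n - d then 0 else d + w := by
    intro w hw
    split_ifs with h
    · rw [h, show d + (n - d) = n from by omega, Nat.mod_self]
    · exact Nat.mod_eq_of_lt (by omega)
  have hGE : G.edgeSet.ncard = n := by rw [hn]; exact edgecount G hreg
  apply hna (c 0) (c d) hc0L hdL
  refine ⟨d + 2, n - d + 2, cyc (d + 2), cyc (n - d + 2), ?_, ?_, ?_⟩
  · -- the 2-sum structure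
    refine ⟨⟨d + 1, by omega⟩, ⟨0, by omega⟩, ⟨d, by omega⟩,
      ⟨n - d + 1, by omega⟩, ⟨n - d, by omega⟩, ⟨0, by omega⟩,
      (fun k => c k.val), (fun k => c ((d + k.val) % n)),
      ?_, ?_, ?_, ?_, ?_, ?_, ?_, ?_, ?_, ?_, ?_, ?_, ?_, ?_, ?_, ?_⟩
    · rw [fin_ne_iff]; show (0:ℕ) ≠ d; omega
    · rw [fin_ne_iff]; show n - d ≠ 0; omega
    · intro u
      rw [cyc_last_adj (by omega) (show d + 1 = (d + 2) - 1 from by omega),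
        Fin.ext_iff, Fin.ext_iff]
      show _ ↔ u.val = 0 ∨ u.val = d
      omega
    · intro u
      rw [cyc_last_adj (by omega) (show n - d + 1 = (n - d + 2) - 1 from by omega),
        Fin.ext_iff, Fin.ext_iff]
      show _ ↔ u.val = n - d ∨ u.val = 0
      omega
    · intro u _ v _ h
      have h1 := u.isLt
      have h2 := v.isLt
      exact Fin.ext (hinj (Set.mem_Iio.mpr (by omega)) (Set.mem_Iio.mpr (by omega)) h)
    · intro u hu v hv h
      have hu' : u.val ≤ n - d := by
        have h1 := u.isLt
        have h2 : u.val ≠ n - d + 1 := fun hh => hu (Fin.ext hh)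
        omega
      have hv' : v.val ≤ n - d := by
        have h1 := v.isLt
        have h2 : v.val ≠ n - d + 1 := fun hh => hv (Fin.ext hh)
        omega
      have heq := hinj (Set.mem_Iio.mpr (Nat.mod_lt _ (show 0 < n from by omega)))
        (Set.mem_Iio.mpr (Nat.mod_lt _ (show 0 < n from by omega))) h
      rw [hmodd _ hu', hmodd _ hv'] at heq
      apply Fin.ext
      split_ifs at heq <;> omega
    · rfl
    · rfl
    · show c ((d + (n - d)) % n) = c 0
      rw [show d + (n - d) = n from by omega, Nat.mod_self]
    · show c ((d + 0) % n) = c d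
      rw [Nat.add_zero, Nat.mod_eq_of_lt (by omega)]
    · intro v
      obtain ⟨k, hkn, hkv⟩ := hsurj v
      rcases le_or_gt k d with hk | hk
      · left
        exact ⟨⟨k, by omega⟩, Fin.ne_of_val_ne (show k ≠ d + 1 from by omega), hkv⟩
      · right
        refine ⟨⟨k - d, by omega⟩, Fin.ne_of_val_ne (show k - d ≠ n - d + 1 from by omega), ?_⟩
        show c ((d + (k - d)) % n) = v
        rw [show d + (k - d) = k from by omega, Nat.mod_eq_of_lt hkn]
        exact hkv
    · ext v
      simp only [Set.mem_inter_iff, Set.mem_image, Set.mem_setOf_eq,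
        Set.mem_insert_iff, Set.mem_singleton_iff]
      constructor
      · rintro ⟨⟨u, hu, rfl⟩, ⟨w, hw, hwv⟩⟩
        have hu' : u.val ≤ d := by
          have h1 := u.isLt
          have h2 : u.val ≠ d + 1 := fun hh => hu (Fin.ext hh)
          omega
        have hw' : w.val ≤ n - d := by
          have h1 := w.isLt
          have h2 : w.val ≠ n - d + 1 := fun hh => hw (Fin.ext hh)
          omega
        have heq := hinj (Set.mem_Iio.mpr (Nat.mod_lt _ (show 0 < n from by omega)))
          (Set.mem_Iio.mpr (show u.val < n from by omega)) hwv
        rw [hmodd _ hw'] at heq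
        split_ifs at heq with hcase
        · left; exact congrArg c heq.symm
        · right; exact congrArg c (show u.val = d from by omega)
      · rintro (rfl | rfl)
        · refine ⟨⟨⟨0, by omega⟩, Fin.ne_of_val_ne (show (0:ℕ) ≠ d + 1 from by omega), rfl⟩,
            ⟨⟨n - d, by omega⟩, Fin.ne_of_val_ne (show n - d ≠ n - d + 1 from by omega), ?_⟩⟩
          show c ((d + (n - d)) % n) = c 0
          rw [show d + (n - d) = n from by omega, Nat.mod_self]
        · refine ⟨⟨⟨d, by omega⟩, Fin.ne_of_val_ne (show d ≠ d + 1 from by omega), rfl⟩,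
            ⟨⟨0, by omega⟩, Fin.ne_of_val_ne (show (0:ℕ) ≠ n - d + 1 from by omega), ?_⟩⟩
          show c ((d + 0) % n) = c d
          rw [Nat.add_zero, Nat.mod_eq_of_lt (by omega)]
    · intro u v hu hv _
      have hu' : u.val ≤ d := by
        have h1 := u.isLt
        have h2 : u.val ≠ d + 1 := fun hh => hu (Fin.ext hh)
        omega
      have hv' : v.val ≤ d := by
        have h1 := v.isLt
        have h2 : v.val ≠ d + 1 := fun hh => hv (Fin.ext hh)
        omega
      show G.Adj (c u.val) (c v.val) ↔ _
      rw [hchar u.val v.val (by omega) (by omega), cyc_adj_iff (by omega) (by omega)]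
      omega
    · intro u v hu hv _
      have hu' : u.val ≤ n - d := by
        have h1 := u.isLt
        have h2 : u.val ≠ n - d + 1 := fun hh => hu (Fin.ext hh)
        omega
      have hv' : v.val ≤ n - d := by
        have h1 := v.isLt
        have h2 : v.val ≠ n - d + 1 := fun hh => hv (Fin.ext hh)
        omega
      show G.Adj (c ((d + u.val) % n)) (c ((d + v.val) % n)) ↔ _
      rw [hchar _ _ (Nat.mod_lt _ (show 0 < n from by omega))
          (Nat.mod_lt _ (show 0 < n from by omega)),
        cyc_adj_iff (show u.val + 2 ≤ n - d + 2 by omega) (show v.val + 2 ≤ n - d + 2 by omega),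
        hmodd _ hu', hmodd _ hv']
      split_ifs <;> (try simp only [false_or, true_and, and_true, or_false]) <;> omega
    · rw [hchar 0 d (by omega) (by omega),
        cyc_adj_iff (show (0:ℕ) + 2 ≤ d + 2 by omega) (show d + 2 ≤ d + 2 by omega),
        cyc_adj_iff (show (n - d) + 2 ≤ n - d + 2 by omega) (show (0:ℕ) + 2 ≤ n - d + 2 by omega)]
      simp only [Fin.val_mk]
      omega
    · intro a b hab
      obtain ⟨i, hi, hia⟩ := hsurj a
      obtain ⟨j, hj, hjb⟩ := hsurj b
      subst hia hjb
      rw [hchar i j hi hj] at hab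
      have memf₁ : ∀ k, k ≤ d → c k ∈ (fun u : Fin (d+2) => c u.val) '' {u | u ≠ ⟨d+1, by omega⟩} :=
        fun k hk => ⟨⟨k, by omega⟩, Fin.ne_of_val_ne (show k ≠ d + 1 from by omega), rfl⟩
      have memf₂ : ∀ k, d ≤ k → k < n →
          c k ∈ (fun u : Fin (n-d+2) => c ((d + u.val) % n)) '' {u | u ≠ ⟨n-d+1, by omega⟩} := by
        intro k hk1 hk2
        refine ⟨⟨k - d, by omega⟩, Fin.ne_of_val_ne (show k - d ≠ n - d + 1 from by omega), ?_⟩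
        show c ((d + (k - d)) % n) = c k
        rw [show d + (k - d) = k from by omega, Nat.mod_eq_of_lt hk2]
      have memf₂0 : c 0 ∈ (fun u : Fin (n-d+2) => c ((d + u.val) % n)) '' {u | u ≠ ⟨n-d+1, by omega⟩} := by
        refine ⟨⟨n - d, by omega⟩, Fin.ne_of_val_ne (show n - d ≠ n - d + 1 from by omega), ?_⟩
        show c ((d + (n - d)) % n) = c 0
        rw [show d + (n - d) = n from by omega, Nat.mod_self]
      rcases hab with rfl | rfl | ⟨rfl, hjn⟩ | ⟨rfl, hin⟩
      · rcases le_or_gt (i + 1) d with hk | hk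
        · exact Or.inl ⟨memf₁ i (by omega), memf₁ (i + 1) (by omega)⟩
        · exact Or.inr ⟨memf₂ i (by omega) (by omega), memf₂ (i + 1) (by omega) (by omega)⟩
      · rcases le_or_gt (j + 1) d with hk | hk
        · exact Or.inl ⟨memf₁ (j + 1) (by omega), memf₁ j (by omega)⟩
        · exact Or.inr ⟨memf₂ (j + 1) (by omega) (by omega), memf₂ j (by omega) (by omega)⟩
      · exact Or.inr ⟨memf₂0, memf₂ j (by omega) (by omega)⟩
      · exact Or.inr ⟨memf₂ i (by omega) (by omega), memf₂0⟩
  · rw [hGE, edgecount _ (fun a => cyc_deg (by omega) a), Fintype.card_fin]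
    omega
  · rw [hGE, edgecount _ (fun a => cyc_deg (by omega) a), Fintype.card_fin]
    omega
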